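/- arXiv:0811.4626 — 2 statements merged into one kernel-verified Lean document; each statement's English description precedes it below -/
import Mathlib

section
/- Let p be a prime, k a field of characteristic p, and P a finite p-group. Let s, t be elements of the center of P of order p with ⟨s⟩ ∩ ⟨t⟩ = {1}. Set A = kP. Let (λ,μ) and (λ′,μ′) be elements of k² ∖ {(0,0)}, and set x = λ(s−1) + μ(t−1) and x′ = λ′(s−1) + μ′(t−1) in A. Then A·x is an indecomposable left A-module, and the following are equivalent: (i) A·x ≅ A·x′ as left A-modules; (ii) A·x = A·x′ as subsets of A; (iii) there exists c ∈ k^× with λ′ = cλ and μ′ = cμ. -/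
open Subgroup
open scoped Classical

section dlog
variable {G : Type*} [Group G] (p : ℕ)

noncomputable def dlog (σ y : G) : ZMod p :=
  if h : ∃ n : ℤ, σ ^ n = y then ((Classical.choose h : ℤ) : ZMod p) else 0

lemma dlog_spec (σ y : G) (h : ∃ n : ℤ, σ ^ n = y) :
    ∃ n : ℤ, σ ^ n = y ∧ ((n : ℤ) : ZMod p) = dlog p σ y := by
  refine ⟨Classical.choose h, Classical.choose_spec h, ?_⟩
  rw [dlog, dif_pos h]

lemma dlog_mul_self (σ y : G) (ho : orderOf σ = p) (h : ∃ n : ℤ, σ ^ n = y) :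
    dlog p σ (y * σ) = dlog p σ y + 1 := by
  obtain ⟨n, hn, hc⟩ := dlog_spec p σ y h
  obtain ⟨m, hm, hc2⟩ := dlog_spec p σ (y * σ) ⟨n + 1, by rw [zpow_add, hn, zpow_one]⟩
  have he : σ ^ m = σ ^ (n + 1) := by rw [hm, zpow_add, hn, zpow_one]
  have hmod : m ≡ n + 1 [ZMOD p] := by
    have := zpow_eq_zpow_iff_modEq.mp he
    rwa [ho] at this
  rw [← hc2, ← hc]
  have : ((m : ℤ) : ZMod p) = ((n + 1 : ℤ) : ZMod p) := (ZMod.intCast_eq_intCast_iff _ _ _).mpr hmod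
  rw [this]; push_cast; ring

end dlog

section cochain

variable {G : Type*} [Group G] (p : ℕ)

lemma zpowers_normal_of_central (b : G) (hb : b ∈ Subgroup.center G) :
    (Subgroup.zpowers b).Normal := by
  constructor
  intro n hn g
  have hcn : n ∈ Subgroup.center G := by
    obtain ⟨m, rfl⟩ := hn
    exact Subgroup.zpow_mem _ hb m
  rw [Subgroup.mem_center_iff] at hcn
  have : g * n * g⁻¹ = n := by rw [mul_inv_eq_iff_eq_mul, hcn g]
  rwa [this]

end cochain

section Fdef

variable {G : Type*} [Group G] (p : ℕ) [Fact p.Prime]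

noncomputable def cochainF (a b : G) (hb : b ∈ Subgroup.center G) : G → ZMod p :=
  letI : (Subgroup.zpowers b).Normal := zpowers_normal_of_central b hb
  fun g =>
    dlog p ((QuotientGroup.mk' (Subgroup.zpowers b)) a)
      ((QuotientGroup.mk (s := Subgroup.zpowers ((QuotientGroup.mk' (Subgroup.zpowers b)) a))
          ((QuotientGroup.mk' (Subgroup.zpowers b)) g)).out⁻¹
        * (QuotientGroup.mk' (Subgroup.zpowers b)) g)
    - dlog p ((QuotientGroup.mk' (Subgroup.zpowers b)) a)
      ((QuotientGroup.mk (s := Subgroup.zpowers ((QuotientGroup.mk' (Subgroup.zpowers b)) a))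
          (1 : G ⧸ Subgroup.zpowers b)).out⁻¹ * 1)

variable (a b : G) (hb : b ∈ Subgroup.center G)

lemma cochainF_one : cochainF p a b hb 1 = 0 := by
  simp only [cochainF, map_one]
  exact sub_self _

lemma cochainF_mul_right (hao : orderOf a = p) (hanb : a ∉ Subgroup.zpowers b) (g : G) : cochainF p a b hb (g * a) = cochainF p a b hb g + 1 := by
  letI : (Subgroup.zpowers b).Normal := zpowers_normal_of_central b hb
  set π := QuotientGroup.mk' (Subgroup.zpowers b) with hπ
  set σ := π a with hσ
  have hσo : orderOf σ = p := by
    have h1 : σ ^ p = 1 := by rw [hσ, ← map_pow, ← hao, pow_orderOf_eq_one, map_one]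
    have h2 : σ ≠ 1 := by
      intro hcon
      exact hanb ((QuotientGroup.eq_one_iff a).mp hcon)
    exact orderOf_eq_prime h1 h2
  have hπm : π (g * a) = π g * σ := by rw [map_mul]
  have hmkeq : (QuotientGroup.mk (s := Subgroup.zpowers σ) (π g * σ))
      = QuotientGroup.mk (s := Subgroup.zpowers σ) (π g) := by
    rw [eq_comm]
    rw [QuotientGroup.eq]
    exact ⟨1, by simp⟩
  have hmem : ∃ n : ℤ, σ ^ n =
      (QuotientGroup.mk (s := Subgroup.zpowers σ) (π g)).out⁻¹ * π g := by
    have := QuotientGroup.out_eq' (QuotientGroup.mk (s := Subgroup.zpowers σ) (π g))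
    have h2 := QuotientGroup.eq.mp this
    exact h2
  simp only [cochainF]
  rw [← hπ, ← hσ, hπm, hmkeq]
  rw [show (QuotientGroup.mk (s := Subgroup.zpowers σ) (π g)).out⁻¹ * (π g * σ)
      = ((QuotientGroup.mk (s := Subgroup.zpowers σ) (π g)).out⁻¹ * π g) * σ by group]
  rw [dlog_mul_self p σ _ hσo hmem]
  ring

lemma cochainF_mul_right_ker (g : G) : cochainF p a b hb (g * b) = cochainF p a b hb g := by
  letI : (Subgroup.zpowers b).Normal := zpowers_normal_of_central b hb
  have : (QuotientGroup.mk' (Subgroup.zpowers b)) (g * b)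
      = (QuotientGroup.mk' (Subgroup.zpowers b)) g := by
    rw [map_mul]
    have : (QuotientGroup.mk' (Subgroup.zpowers b)) b = 1 :=
      (QuotientGroup.eq_one_iff b).mpr (Subgroup.mem_zpowers b)
    rw [this, mul_one]
  simp only [cochainF]
  rw [this]

end Fdef

section Psi

variable {k : Type*} [Field k] {P : Type*} [Group P]

noncomputable def Psi (W : P → k) : MonoidAlgebra k P →ₗ[k] k :=
  Finsupp.linearCombination k W ∘ₗ (MonoidAlgebra.coeffLinearEquiv k).toLinearMap

lemma Psi_single (W : P → k) (g : P) (c : k) :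
    Psi W (MonoidAlgebra.single g c) = c * W g := by
  change Finsupp.linearCombination k W (Finsupp.single g c) = c * W g
  rw [Finsupp.linearCombination_single, smul_eq_mul]

lemma Psi_congr_weight (W1 W2 : P → k) (h : ∀ g, W1 g = W2 g) (a : MonoidAlgebra k P) :
    Psi W1 a = Psi W2 a := by
  have : W1 = W2 := funext h
  rw [this]

lemma Psi_add_weight (W1 W2 : P → k) (a : MonoidAlgebra k P) :
    Psi (fun g => W1 g + W2 g) a = Psi W1 a + Psi W2 a := by
  induction a using MonoidAlgebra.induction_linear with
  | zero => simp
  | add f g hf hg => simp only [map_add, hf, hg]; ring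
  | single g c =>
      rw [Psi_single, Psi_single, Psi_single]
      ring

lemma Psi_mul_of (W : P → k) (u : P) (a : MonoidAlgebra k P) :
    Psi W (a * MonoidAlgebra.of k P u) = Psi (fun g => W (g * u)) a := by
  induction a using MonoidAlgebra.induction_linear with
  | zero => simp
  | add f g hf hg => rw [add_mul, map_add, hf, hg, map_add]
  | single g c =>
      rw [MonoidAlgebra.of_apply, MonoidAlgebra.single_mul_single, Psi_single, Psi_single,
        mul_one]

end Psi

set_option linter.unusedSectionVars false

section Pascal

variable {p : ℕ} [Fact p.Prime] {k : Type*} [Field k] [CharP k p]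

lemma choose_val_succ (z : ZMod p) (i : ℕ) (hi1 : 1 ≤ i) (hi2 : i ≤ p - 1) :
    (((z + 1).val.choose i : ℕ) : k)
      = ((z.val.choose i : ℕ) : k) + ((z.val.choose (i - 1) : ℕ) : k) := by
  have hp : p.Prime := Fact.out
  haveI : NeZero p := ⟨hp.pos.ne'⟩
  have hplt : 1 < p := hp.one_lt
  have hzlt : z.val < p := ZMod.val_lt z
  obtain ⟨i', rfl⟩ : ∃ i', i = i' + 1 := ⟨i - 1, by omega⟩
  rcases Nat.lt_or_ge z.val (p - 1) with hlt | hge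
  · have hsum : z.val + (1 : ZMod p).val < p := by
      rw [ZMod.val_one]
      omega
    have hv : (z + 1).val = z.val + 1 := by
      rw [ZMod.val_add_of_lt hsum, ZMod.val_one]
    rw [hv, Nat.choose_succ_succ, Nat.add_sub_cancel]
    push_cast
    ring
  · have heq : z.val = p - 1 := by omega
    have hz1 : z + 1 = 0 := by
      have : z = ((p - 1 : ℕ) : ZMod p) := by
        rw [← heq, ZMod.natCast_val, ZMod.cast_id]
      rw [this, ← Nat.cast_one (R := ZMod p), ← Nat.cast_add, Nat.sub_add_cancel hp.one_le,
        ZMod.natCast_self]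
    have h0 : (0 : ℕ).choose (i' + 1) = 0 := Nat.choose_eq_zero_of_lt (by omega)
    rw [hz1, ZMod.val_zero, h0, heq]
    have hcomb : (p - 1).choose (i' + 1) + (p - 1).choose (i' + 1 - 1) = p.choose (i' + 1) := by
      obtain ⟨q, hq⟩ : ∃ q, p = q + 1 := ⟨p - 1, by omega⟩
      subst hq
      rw [Nat.add_sub_cancel, Nat.add_sub_cancel, Nat.choose_succ_succ]
      simp only [Nat.succ_eq_add_one]
      omega
    have hzero : ((p.choose (i' + 1) : ℕ) : k) = 0 := by
      obtain ⟨c, hc⟩ := Nat.Prime.dvd_choose_self (k := i' + 1) hp (by omega) (by omega)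
      rw [hc]
      push_cast
      rw [CharP.cast_eq_zero (R := k) (p := p)]
      ring
    rw [← hcomb] at hzero
    push_cast [Nat.add_sub_cancel] at hzero ⊢
    linear_combination -hzero

end Pascal

section Main

variable {k P : Type} {p : ℕ} [Fact p.Prime] [Field k] [CharP k p] [Group P]

open MonoidAlgebra

lemma Psi_mul_lin (s t : P) (c d : k) (W : P → k) (a : MonoidAlgebra k P) :
    Psi W (a * (c • (of k P s - 1) + d • (of k P t - 1)))
      = c * Psi (fun g => W (g * s)) a + d * Psi (fun g => W (g * t)) a
        - (c + d) * Psi W a := by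
  have expand : a * (c • (of k P s - 1) + d • (of k P t - 1))
      = c • (a * of k P s) + d • (a * of k P t) - (c + d) • a := by
    simp only [mul_add, mul_sub, mul_one, mul_smul_comm, smul_sub, add_smul]
    abel
  rw [expand, map_sub, map_add, map_smul, map_smul, map_smul, Psi_mul_of, Psi_mul_of,
    smul_eq_mul, smul_eq_mul, smul_eq_mul]

lemma det_eq_zero_of_annihilate
    (s t : P) (hs : s ∈ Subgroup.center P) (ht : t ∈ Subgroup.center P)
    (hso : orderOf s = p) (hto : orderOf t = p)
    (hst : Subgroup.zpowers s ⊓ Subgroup.zpowers t = ⊥)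
    (lam mu lam' mu' : k) (hlm : (lam, mu) ≠ (0, 0)) (hlm' : (lam', mu') ≠ (0, 0))
    (x x' : MonoidAlgebra k P)
    (hx : x = lam • (MonoidAlgebra.of k P s - 1) + mu • (MonoidAlgebra.of k P t - 1))
    (hx' : x' = lam' • (MonoidAlgebra.of k P s - 1) + mu' • (MonoidAlgebra.of k P t - 1))
    (h : x ^ (p - 1) * x' = 0) :
    lam * mu' - mu * lam' = 0 := by
  have hp : p.Prime := Fact.out
  have hp2 : 2 ≤ p := hp.two_le
  have hs1 : s ≠ 1 := by
    intro hcon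
    rw [hcon, orderOf_one] at hso
    omega
  have ht1 : t ≠ 1 := by
    intro hcon
    rw [hcon, orderOf_one] at hto
    omega
  have hsnt : s ∉ Subgroup.zpowers t := by
    intro hcon
    have : s ∈ Subgroup.zpowers s ⊓ Subgroup.zpowers t := ⟨Subgroup.mem_zpowers s, hcon⟩
    rw [hst] at this
    exact hs1 this
  have htns : t ∉ Subgroup.zpowers s := by
    intro hcon
    have : t ∈ Subgroup.zpowers s ⊓ Subgroup.zpowers t := ⟨hcon, Subgroup.mem_zpowers t⟩
    rw [hst] at this
    exact ht1 this
  -- the two cocycles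
  set F : P → ZMod p := cochainF p s t ht with hF
  set Gf : P → ZMod p := cochainF p t s hs with hG
  have hFs : ∀ g, F (g * s) = F g + 1 := cochainF_mul_right p s t ht hso hsnt
  have hFt : ∀ g, F (g * t) = F g := cochainF_mul_right_ker p s t ht
  have hGt : ∀ g, Gf (g * t) = Gf g + 1 := cochainF_mul_right p t s hs hto htns
  have hGs : ∀ g, Gf (g * s) = Gf g := cochainF_mul_right_ker p t s hs
  have hF1 : F 1 = 0 := cochainF_one p s t ht
  have hG1 : Gf 1 = 0 := cochainF_one p t s hs
  -- weights
  set w : ℕ → ℕ → P → k :=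
    fun i j g => (((F g).val.choose i : ℕ) : k) * (((Gf g).val.choose j : ℕ) : k) with hw
  have hws : ∀ i j, 1 ≤ i → i ≤ p - 1 →
      ∀ g, w i j (g * s) = w i j g + w (i - 1) j g := by
    intro i j hi1 hi2 g
    rw [hw]
    simp only
    rw [hFs, hGs, choose_val_succ (F g) i hi1 hi2]
    ring
  have hws0 : ∀ j g, w 0 j (g * s) = w 0 j g := by
    intro j g
    rw [hw]
    simp only
    rw [hFs, hGs]
    simp [Nat.choose_zero_right]
  have hwt : ∀ i j, 1 ≤ j → j ≤ p - 1 →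
      ∀ g, w i j (g * t) = w i j g + w i (j - 1) g := by
    intro i j hj1 hj2 g
    rw [hw]
    simp only
    rw [hFt, hGt, choose_val_succ (Gf g) j hj1 hj2]
    ring
  have hwt0 : ∀ i g, w i 0 (g * t) = w i 0 g := by
    intro i g
    rw [hw]
    simp only
    rw [hFt, hGt]
    simp [Nat.choose_zero_right]
  have hw1 : ∀ i j, w i j 1 = if i = 0 ∧ j = 0 then 1 else 0 := by
    intro i j
    rw [hw]
    simp only
    rw [hF1, hG1, ZMod.val_zero]
    rcases Nat.eq_zero_or_pos i with hi | hi
    · rcases Nat.eq_zero_or_pos j with hj | hj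
      · simp [hi, hj]
      · rw [if_neg (by omega)]
        subst hi
        rw [Nat.choose_eq_zero_of_lt (by omega : (0:ℕ) < j)]
        simp
    · rw [if_neg (by omega)]
      rw [Nat.choose_eq_zero_of_lt (by omega : (0:ℕ) < i)]
      simp
  -- the main induction
  have hd : ∀ m i j, i ≤ p - 1 → j ≤ p - 1 →
      Psi (w i j) (x ^ m) = if i + j = m then ((m.choose i : ℕ) : k) * lam ^ i * mu ^ j else 0 := by
    intro m
    induction m with
    | zero =>
        intro i j hi hj
        rw [pow_zero]
        have h1 : (1 : MonoidAlgebra k P) = MonoidAlgebra.single 1 1 := rfl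
        rw [h1, Psi_single, one_mul, hw1]
        rcases Nat.eq_zero_or_pos i with hi0 | hi0
        · rcases Nat.eq_zero_or_pos j with hj0 | hj0
          · subst hi0; subst hj0; simp
          · rw [if_neg (by omega), if_neg (by omega)]
        · rw [if_neg (by omega), if_neg (by omega)]
    | succ m ih =>
        intro i j hi hj
        rw [pow_succ, hx, Psi_mul_lin]
        rw [← hx]
        rcases Nat.eq_zero_or_pos i with hi0 | hi0
        · subst hi0
          have e1 : Psi (fun g => w 0 j (g * s)) (x ^ m) = Psi (w 0 j) (x ^ m) :=
            Psi_congr_weight _ _ (fun g => hws0 j g) _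
          rcases Nat.eq_zero_or_pos j with hj0 | hj0
          · subst hj0
            have e2 : Psi (fun g => w 0 0 (g * t)) (x ^ m) = Psi (w 0 0) (x ^ m) :=
              Psi_congr_weight _ _ (fun g => hwt0 0 g) _
            rw [e1, e2, if_neg (by omega)]
            ring
          · have e2 : Psi (fun g => w 0 j (g * t)) (x ^ m)
                = Psi (w 0 j) (x ^ m) + Psi (w 0 (j - 1)) (x ^ m) := by
              rw [Psi_congr_weight _ (fun g => w 0 j g + w 0 (j-1) g)
                (fun g => hwt 0 j hj0 hj g) _, Psi_add_weight]
            rw [e1, e2, ih 0 j (by omega) hj, ih 0 (j-1) (by omega) (by omega)]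
            obtain ⟨j', rfl⟩ : ∃ j', j = j' + 1 := ⟨j - 1, by omega⟩
            simp only [Nat.add_sub_cancel]
            rcases eq_or_ne (0 + (j' + 1)) (m + 1) with hc | hc
            · rw [if_pos hc, if_pos (by omega : 0 + j' = m), if_neg (by omega)]
              simp only [Nat.choose_zero_right, Nat.cast_one, pow_zero]
              rw [pow_succ]
              ring
            · rw [if_neg hc, if_neg (by omega : ¬(0 + j' = m))]
              ring
        · obtain ⟨i', rfl⟩ : ∃ i', i = i' + 1 := ⟨i - 1, by omega⟩
          have e1 : Psi (fun g => w (i' + 1) j (g * s)) (x ^ m)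
              = Psi (w (i' + 1) j) (x ^ m) + Psi (w i' j) (x ^ m) := by
            rw [Psi_congr_weight _ (fun g => w (i'+1) j g + w ((i'+1)-1) j g)
              (fun g => hws (i'+1) j (by omega) hi g) _]
            simp only [Nat.add_sub_cancel]
            rw [Psi_add_weight]
          rcases Nat.eq_zero_or_pos j with hj0 | hj0
          · subst hj0
            have e2 : Psi (fun g => w (i' + 1) 0 (g * t)) (x ^ m)
                = Psi (w (i' + 1) 0) (x ^ m) :=
              Psi_congr_weight _ _ (fun g => hwt0 (i' + 1) g) _
            rw [e1, e2, ih (i' + 1) 0 hi (by omega), ih i' 0 (by omega) (by omega)]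
            rcases eq_or_ne (i' + 1 + 0) (m + 1) with hc | hc
            · rw [if_pos hc, if_pos (by omega : i' + 0 = m), if_neg (by omega)]
              have : (m + 1).choose (i' + 1) = m.choose i' + m.choose (i' + 1) := by
                rw [Nat.choose_succ_succ]
              rw [this]
              have hchoose0 : m.choose (i' + 1) = 0 := Nat.choose_eq_zero_of_lt (by omega)
              rw [hchoose0]
              push_cast
              rw [pow_succ]
              ring
            · rw [if_neg hc, if_neg (by omega : ¬(i' + 0 = m))]
              ring
          · obtain ⟨j', rfl⟩ : ∃ j', j = j' + 1 := ⟨j - 1, by omega⟩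
            have e2 : Psi (fun g => w (i' + 1) (j' + 1) (g * t)) (x ^ m)
                = Psi (w (i' + 1) (j' + 1)) (x ^ m) + Psi (w (i' + 1) j') (x ^ m) := by
              rw [Psi_congr_weight _ (fun g => w (i'+1) (j'+1) g + w (i'+1) ((j'+1)-1) g)
                (fun g => hwt (i'+1) (j'+1) (by omega) hj g) _]
              simp only [Nat.add_sub_cancel]
              rw [Psi_add_weight]
            rw [e1, e2, ih (i' + 1) (j' + 1) hi hj, ih i' (j' + 1) (by omega) hj,
              ih (i' + 1) j' hi (by omega)]
            rcases eq_or_ne (i' + 1 + (j' + 1)) (m + 1) with hc | hc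
            · rw [if_pos hc, if_pos (by omega : i' + (j' + 1) = m),
                if_pos (by omega : i' + 1 + j' = m), if_neg (by omega)]
              have : (m + 1).choose (i' + 1) = m.choose i' + m.choose (i' + 1) := by
                rw [Nat.choose_succ_succ]
              rw [this]
              push_cast
              rw [pow_succ, pow_succ]
              ring
            · rw [if_neg hc, if_neg (by omega : ¬(i' + (j' + 1) = m)),
                if_neg (by omega : ¬(i' + 1 + j' = m))]
              ring
  -- apply to  x^(p-1) * x'
  have key : ∀ i j, 1 ≤ i → i ≤ p - 1 → 1 ≤ j → j ≤ p - 1 →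
      lam' * Psi (w (i - 1) j) (x ^ (p - 1)) + mu' * Psi (w i (j - 1)) (x ^ (p - 1)) = 0 := by
    intro i j hi1 hi2 hj1 hj2
    have h0 : Psi (w i j) (x ^ (p - 1) * x') = 0 := by rw [h, map_zero]
    rw [hx', Psi_mul_lin] at h0
    have e1 : Psi (fun g => w i j (g * s)) (x ^ (p - 1))
        = Psi (w i j) (x ^ (p - 1)) + Psi (w (i - 1) j) (x ^ (p - 1)) := by
      rw [Psi_congr_weight _ (fun g => w i j g + w (i-1) j g) (fun g => hws i j hi1 hi2 g) _,
        Psi_add_weight]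
    have e2 : Psi (fun g => w i j (g * t)) (x ^ (p - 1))
        = Psi (w i j) (x ^ (p - 1)) + Psi (w i (j - 1)) (x ^ (p - 1)) := by
      rw [Psi_congr_weight _ (fun g => w i j g + w i (j-1) g) (fun g => hwt i j hj1 hj2 g) _,
        Psi_add_weight]
    rw [e1, e2] at h0
    linear_combination h0
  have hm1 : ((p - 1 : ℕ) : k) = -1 := by
    have : ((p - 1 : ℕ) : k) = ((p : ℕ) : k) - 1 := by
      push_cast [Nat.cast_sub hp.one_le]
      ring
    rw [this, CharP.cast_eq_zero (R := k) (p := p)]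
    ring
  -- first relation : (i,j) = (p-1, 1)
  have hrel1 : lam ^ (p - 2) * (lam * mu' - mu * lam') = 0 := by
    have hk := key (p - 1) 1 (by omega) (le_refl _) (by omega) (by omega)
    have hd1 : Psi (w (p - 1 - 1) 1) (x ^ (p - 1))
        = ((p - 1 : ℕ) : k) * lam ^ (p - 2) * mu := by
      rw [hd (p - 1) (p - 1 - 1) 1 (by omega) (by omega), if_pos (by omega)]
      have : (p - 1).choose (p - 1 - 1) = p - 1 := by
        rw [Nat.choose_symm (by omega : 1 ≤ p - 1), Nat.choose_one_right]
      rw [this, pow_one]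
      congr 2
    have hd2 : Psi (w (p - 1) 0) (x ^ (p - 1)) = lam ^ (p - 1) := by
      rw [hd (p - 1) (p - 1) 0 (le_refl _) (by omega), if_pos (by omega), Nat.choose_self]
      push_cast
      ring
    rw [hd1, hd2, hm1] at hk
    have hpow : lam ^ (p - 1) = lam ^ (p - 2) * lam := by
      rw [← pow_succ]
      congr 1
      omega
    rw [hpow] at hk
    linear_combination hk
  -- second relation : (i,j) = (1, p-1)
  have hrel2 : mu ^ (p - 2) * (lam * mu' - mu * lam') = 0 := by
    have hk := key 1 (p - 1) (by omega) (by omega) (by omega) (le_refl _)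
    have hd1 : Psi (w 0 (p - 1)) (x ^ (p - 1)) = mu ^ (p - 1) := by
      rw [hd (p - 1) 0 (p - 1) (by omega) (le_refl _), if_pos (by omega), Nat.choose_zero_right]
      push_cast
      ring
    have hd2 : Psi (w 1 (p - 1 - 1)) (x ^ (p - 1))
        = ((p - 1 : ℕ) : k) * lam * mu ^ (p - 2) := by
      rw [hd (p - 1) 1 (p - 1 - 1) (by omega) (by omega), if_pos (by omega), Nat.choose_one_right]
      rw [pow_one]
      congr 2
    rw [hd1, hd2, hm1] at hk
    have hpow : mu ^ (p - 1) = mu ^ (p - 2) * mu := by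
      rw [← pow_succ]
      congr 1
      omega
    rw [hpow] at hk
    linear_combination -hk
  -- conclude
  by_contra hdet
  rcases eq_or_ne p 2 with hp2' | hp2'
  · rw [hp2'] at hrel1
    norm_num at hrel1
    exact hdet hrel1
  · have hlam : lam = 0 := by
      have := mul_eq_zero.mp hrel1
      rcases this with h1 | h1
      · exact pow_eq_zero_iff (by omega : p - 2 ≠ 0) |>.mp h1
      · exact absurd h1 hdet
    have hmu : mu = 0 := by
      have := mul_eq_zero.mp hrel2
      rcases this with h1 | h1
      · exact pow_eq_zero_iff (by omega : p - 2 ≠ 0) |>.mp h1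
      · exact absurd h1 hdet
    exact hlm (by rw [hlam, hmu])

end Main

section Glue

variable {k P : Type} {p : ℕ} [Fact p.Prime] [Field k] [CharP k p] [Group P]

open MonoidAlgebra

lemma exists_unit_of_det_zero (lam mu lam' mu' : k)
    (hlm : (lam, mu) ≠ (0, 0)) (hlm' : (lam', mu') ≠ (0, 0))
    (hdet : lam * mu' - mu * lam' = 0) :
    ∃ c : kˣ, lam' = (c : k) * lam ∧ mu' = (c : k) * mu := by
  rcases eq_or_ne lam 0 with hl | hl
  · have hmu : mu ≠ 0 := by
      intro hm
      exact hlm (by rw [hl, hm])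
    have hlam' : lam' = 0 := by
      have : mu * lam' = 0 := by rw [hl] at hdet; linear_combination -hdet
      rcases mul_eq_zero.mp this with h1 | h1
      · exact absurd h1 hmu
      · exact h1
    have hmu' : mu' ≠ 0 := by
      intro hm
      exact hlm' (by rw [hlam', hm])
    refine ⟨Units.mk0 (mu' / mu) (div_ne_zero hmu' hmu), ?_, ?_⟩
    · rw [hl, hlam']; ring
    · rw [Units.val_mk0, div_mul_cancel₀ mu' hmu]
  · have hlam' : lam' ≠ 0 := by
      intro hl'
      have : lam * mu' = 0 := by rw [hl'] at hdet; linear_combination hdet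
      rcases mul_eq_zero.mp this with h1 | h1
      · exact absurd h1 hl
      · exact hlm' (by rw [hl', h1])
    refine ⟨Units.mk0 (lam' / lam) (div_ne_zero hlam' hl), ?_, ?_⟩
    · simp only [Units.val_mk0]
      field_simp
    · simp only [Units.val_mk0]
      rw [div_mul_eq_mul_div, eq_div_iff hl]
      linear_combination hdet

lemma of_comm_of_center (g : P) (hg : g ∈ Subgroup.center P) (a : MonoidAlgebra k P) :
    a * of k P g = of k P g * a := by
  have hginv : g⁻¹ ∈ Subgroup.center P := Subgroup.inv_mem _ hg
  ext h
  rw [of_apply, MonoidAlgebra.mul_single_apply, MonoidAlgebra.single_mul_apply]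
  rw [Subgroup.mem_center_iff] at hginv
  rw [hginv h, mul_comm]

lemma x_central (s t : P) (hs : s ∈ Subgroup.center P) (ht : t ∈ Subgroup.center P)
    (lam mu : k) (x : MonoidAlgebra k P)
    (hx : x = lam • (of k P s - 1) + mu • (of k P t - 1)) (a : MonoidAlgebra k P) :
    Commute a x := by
  rw [hx]
  exact Commute.add_right
    (Commute.smul_right (Commute.sub_right (of_comm_of_center s hs a) (Commute.one_right a)) lam)
    (Commute.smul_right (Commute.sub_right (of_comm_of_center t ht a) (Commute.one_right a)) mu)

lemma charP_MA [Nonempty P] : CharP (MonoidAlgebra k P) p := by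
  have hinj : Function.Injective (algebraMap k (MonoidAlgebra k P)) := by
    intro a b hab
    have := congrArg (fun f : MonoidAlgebra k P => f.coeff 1) hab
    simpa [MonoidAlgebra.coe_algebraMap, MonoidAlgebra.coeff_single, Finsupp.single_eq_same] using this
  exact charP_of_injective_algebraMap hinj p

lemma x_pow_p_eq_zero (s t : P) (hs : s ∈ Subgroup.center P) (ht : t ∈ Subgroup.center P)
    (hso : orderOf s = p) (hto : orderOf t = p)
    (lam mu : k) (x : MonoidAlgebra k P)
    (hx : x = lam • (of k P s - 1) + mu • (of k P t - 1)) :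
    x ^ p = 0 := by
  haveI : Nonempty P := ⟨s⟩
  haveI : CharP (MonoidAlgebra k P) p := charP_MA
  have h1 : Commute (of k P s) (of k P t) := of_comm_of_center t ht (of k P s)
  have hB : Commute (1 : MonoidAlgebra k P) (of k P t - 1) := Commute.one_left _
  have hC : Commute (of k P s - 1) (of k P t - 1) :=
    (h1.sub_right (Commute.one_right _)).sub_left hB
  have hcomm : Commute (lam • (of k P s - 1)) (mu • (of k P t - 1)) :=
    (hC.smul_left lam).smul_right mu
  rw [hx, add_pow_char_of_commute p hcomm]
  have hs0 : (of k P s - 1) ^ p = 0 := by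
    rw [sub_pow_char_of_commute p (Commute.one_right _), ← map_pow, ← hso,
      pow_orderOf_eq_one, map_one, one_pow, sub_self]
  have ht0 : (of k P t - 1) ^ p = 0 := by
    rw [sub_pow_char_of_commute p (Commute.one_right _), ← map_pow, ← hto,
      pow_orderOf_eq_one, map_one, one_pow, sub_self]
  rw [smul_pow, smul_pow, hs0, ht0, smul_zero, smul_zero, add_zero]

end Glue

section Socle

variable {k P : Type} {p : ℕ} [Fact p.Prime] [Field k] [CharP k p] [Group P] [Fintype P]

open MonoidAlgebra

noncomputable def zedd (k P : Type) [Field k] [Group P] [Fintype P] : MonoidAlgebra k P :=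
  ∑ g : P, MonoidAlgebra.single g 1

lemma zedd_apply (h : P) : (zedd k P).coeff h = 1 := by
  rw [zedd]
  rw [show ((∑ g : P, MonoidAlgebra.single g 1 : MonoidAlgebra k P).coeff h)
    = ∑ g : P, (Finsupp.single g (1:k)) h by rw [MonoidAlgebra.coeff_sum, Finsupp.finset_sum_apply]; rfl]
  rw [Finset.sum_congr rfl (fun g _ => Finsupp.single_apply)]
  rw [Finset.sum_ite_eq' Finset.univ h (fun _ => (1:k))]
  simp

lemma zedd_ne_zero : zedd k P ≠ 0 := by
  intro hcon
  have := zedd_apply (k := k) (P := P) 1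
  rw [hcon] at this
  simp at this

lemma zedd_mem (hP : IsPGroup p P)
    (W : Submodule (MonoidAlgebra k P) (MonoidAlgebra k P)) (w : MonoidAlgebra k P)
    (hwW : w ∈ W) (hw0 : w ≠ 0) : zedd k P ∈ W := by
  classical
  have hp : p.Prime := Fact.out
  haveI : Nonempty P := ⟨1⟩
  haveI : CharP (MonoidAlgebra k P) p := charP_MA
  -- the ZMod p span of the orbit of w
  set Φfun : (P → ZMod p) → MonoidAlgebra k P :=
    fun c => ∑ g : P, (c g).val • (of k P g * w) with hΦfun
  have hsmul_mod : ∀ (n : ℕ) (b : MonoidAlgebra k P), (n % p) • b = n • b := by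
    intro n b
    have h1 : (n : MonoidAlgebra k P) = ((n % p : ℕ) : MonoidAlgebra k P) := by
      conv_lhs => rw [← Nat.div_add_mod n p]
      push_cast
      rw [CharP.cast_eq_zero (R := MonoidAlgebra k P) (p := p), zero_mul, zero_add]
    rw [nsmul_eq_mul, nsmul_eq_mul, ← h1]
  have hadd : ∀ c1 c2, Φfun (c1 + c2) = Φfun c1 + Φfun c2 := by
    intro c1 c2
    rw [hΦfun]
    simp only [← Finset.sum_add_distrib]
    apply Finset.sum_congr rfl
    intro g _
    rw [Pi.add_apply, ZMod.val_add, hsmul_mod, add_nsmul]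
  set Φ : (P → ZMod p) →+ MonoidAlgebra k P := AddMonoidHom.mk' Φfun hadd with hΦ
  set V₀ : AddSubgroup (MonoidAlgebra k P) := Φ.range with hV₀
  haveI hVfin : Finite ↥V₀ := by
    apply Set.Finite.to_subtype
    have : (V₀ : Set (MonoidAlgebra k P)) = Set.range Φ := AddMonoidHom.coe_range Φ
    rw [this]
    exact Set.finite_range _
  have hwV : w ∈ V₀ := by
    refine ⟨fun g => if g = 1 then 1 else 0, ?_⟩
    show Φfun _ = w
    rw [hΦfun]
    simp only
    rw [Finset.sum_eq_single_of_mem 1 (Finset.mem_univ 1)]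
    · rw [if_pos rfl, ZMod.val_one, one_nsmul, map_one, one_mul]
    · intro g _ hg
      simp [hg]
  have hstab : ∀ (g : P) (v : MonoidAlgebra k P), v ∈ V₀ → of k P g * v ∈ V₀ := by
    intro g v hv
    obtain ⟨c, hc⟩ := hv
    refine ⟨fun h => c (g⁻¹ * h), ?_⟩
    show Φfun _ = of k P g * v
    rw [← hc]
    show Φfun _ = of k P g * Φfun c
    rw [hΦfun]
    simp only
    rw [Finset.mul_sum]
    refine (Fintype.sum_equiv (Equiv.mulLeft g)
      (fun x => of k P g * ((c x).val • (of k P x * w)))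
      (fun h => (c (g⁻¹ * h)).val • (of k P h * w)) ?_).symm
    intro x
    simp only [Equiv.coe_mulLeft]
    rw [mul_smul_comm, ← mul_assoc, ← map_mul, inv_mul_cancel_left]
  have hVW : ∀ v ∈ V₀, v ∈ W := by
    intro v hv
    obtain ⟨c, hc⟩ := hv
    rw [← hc]
    show Φfun c ∈ W
    rw [hΦfun]
    apply Submodule.sum_mem
    intro g _
    apply W.toAddSubmonoid.nsmul_mem
    have : of k P g * w = of k P g • w := rfl
    rw [this]
    exact W.smul_mem _ hwW
  -- p divides the cardinality of V₀
  have hpcard : p ∣ Nat.card ↥V₀ := by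
    have hword : addOrderOf (⟨w, hwV⟩ : ↥V₀) = p := by
      have hdvd : addOrderOf (⟨w, hwV⟩ : ↥V₀) ∣ p := by
        apply addOrderOf_dvd_of_nsmul_eq_zero
        apply Subtype.ext
        show p • w = 0
        rw [nsmul_eq_mul, CharP.cast_eq_zero (R := MonoidAlgebra k P) (p := p), zero_mul]
      rcases (Nat.Prime.eq_one_or_self_of_dvd hp _ hdvd) with h1 | h1
      · exfalso
        rw [AddMonoid.addOrderOf_eq_one_iff] at h1
        apply hw0
        have := Subtype.ext_iff.mp h1
        exact this
      · exact h1
    rw [← hword]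
    exact addOrderOf_dvd_natCard _
  -- the action of P on V₀
  letI : MulAction P ↥V₀ :=
    { smul := fun g v => ⟨of k P g * (v : MonoidAlgebra k P), hstab g _ v.2⟩
      one_smul := by
        intro v
        apply Subtype.ext
        show of k P 1 * ↑v = ↑v
        rw [map_one, one_mul]
      mul_smul := by
        intro g h v
        apply Subtype.ext
        show of k P (g * h) * ↑v = of k P g * (of k P h * ↑v)
        rw [map_mul, mul_assoc] }
  have hmod := hP.card_modEq_card_fixedPoints ↥V₀
  haveI : Nonempty (MulAction.fixedPoints P ↥V₀) := ⟨⟨(0 : ↥V₀), by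
    intro g
    apply Subtype.ext
    show of k P g * ((0 : ↥V₀) : MonoidAlgebra k P) = ((0 : ↥V₀) : MonoidAlgebra k P)
    rw [ZeroMemClass.coe_zero, mul_zero]⟩⟩
  have hpfix : p ∣ Nat.card (MulAction.fixedPoints P ↥V₀) := by
    apply Nat.dvd_of_mod_eq_zero
    have h2 : Nat.card (MulAction.fixedPoints P ↥V₀) % p = Nat.card ↥V₀ % p := hmod.symm
    rw [h2, Nat.mod_eq_zero_of_dvd hpcard]
  have hcard1 : 1 < Nat.card (MulAction.fixedPoints P ↥V₀) := by
    have hpos : 0 < Nat.card (MulAction.fixedPoints P ↥V₀) := Nat.card_pos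
    have := Nat.le_of_dvd hpos hpfix
    have := hp.two_le
    omega
  haveI := Fintype.ofFinite (MulAction.fixedPoints P ↥V₀)
  rw [Nat.card_eq_fintype_card] at hcard1
  obtain ⟨v, hvne⟩ := Fintype.exists_ne_of_one_lt_card hcard1 ⟨(0 : ↥V₀), by
    intro g
    apply Subtype.ext
    show of k P g * ((0 : ↥V₀) : MonoidAlgebra k P) = ((0 : ↥V₀) : MonoidAlgebra k P)
    rw [ZeroMemClass.coe_zero, mul_zero]⟩
  set u : MonoidAlgebra k P := ((v : ↥V₀) : MonoidAlgebra k P) with hu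
  have hu0 : u ≠ 0 := by
    intro hcon
    apply hvne
    apply Subtype.ext
    apply Subtype.ext
    exact hcon
  have huW : u ∈ W := hVW u (v : ↥V₀).2
  have hfix : ∀ g : P, of k P g * u = u := by
    intro g
    have := v.2 g
    exact Subtype.ext_iff.mp this
  have hconst : ∀ g : P, u.coeff g = u.coeff 1 := by
    intro g
    have h1 := hfix g
    have h2 := congrArg (fun f : MonoidAlgebra k P => f.coeff g) h1
    rw [of_apply, MonoidAlgebra.single_mul_apply, inv_mul_cancel, one_mul] at h2
    exact h2.symm
  have hzedd : u = (u.coeff 1) • zedd k P := by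
    apply MonoidAlgebra.ext
    apply Finsupp.ext
    intro g
    show u.coeff g = ((u.coeff 1) • zedd k P).coeff g
    rw [MonoidAlgebra.coeff_smul, Finsupp.smul_apply]
    rw [show (zedd k P).coeff g = 1 from zedd_apply g]
    rw [smul_eq_mul, mul_one]
    exact hconst g
  have hu1 : u.coeff 1 ≠ 0 := by
    intro hcon
    apply hu0
    apply MonoidAlgebra.ext
    apply Finsupp.ext
    intro g
    rw [hconst g, hcon]
    rfl
  have hz2 : zedd k P = (u.coeff 1)⁻¹ • u := by
    apply MonoidAlgebra.ext
    apply Finsupp.ext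
    intro g
    rw [show (zedd k P).coeff g = 1 from zedd_apply g, MonoidAlgebra.coeff_smul, Finsupp.smul_apply, smul_eq_mul, hconst g,
      inv_mul_cancel₀ hu1]
  rw [hz2]
  exact W.smul_of_tower_mem _ huW

end Socle

def IsIndecomposableModule (A : Type*) (M : Type*) [Ring A] [AddCommGroup M]
    [Module A M] : Prop :=
  (∃ m : M, m ≠ 0) ∧
    ∀ W W' : Submodule A M, W ⊓ W' = ⊥ → W ⊔ W' = ⊤ → W = ⊥ ∨ W' = ⊥

theorem stmt4 {k P : Type} (p : ℕ) [Fact p.Prime] [Field k] [CharP k p]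
    [Group P] [Finite P] (hP : IsPGroup p P)
    (s t : P) (hs : s ∈ Subgroup.center P) (ht : t ∈ Subgroup.center P)
    (hso : orderOf s = p) (hto : orderOf t = p)
    (hst : Subgroup.zpowers s ⊓ Subgroup.zpowers t = ⊥)
    (lam mu lam' mu' : k) (hlm : (lam, mu) ≠ (0, 0)) (hlm' : (lam', mu') ≠ (0, 0))
    (x x' : MonoidAlgebra k P)
    (hx : x = lam • (MonoidAlgebra.of k P s - 1) + mu • (MonoidAlgebra.of k P t - 1))
    (hx' : x' = lam' • (MonoidAlgebra.of k P s - 1) + mu' • (MonoidAlgebra.of k P t - 1)) :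
    IsIndecomposableModule (MonoidAlgebra k P)
        (Submodule.span (MonoidAlgebra k P) {x}) ∧
      ((Nonempty ((Submodule.span (MonoidAlgebra k P) {x}) ≃ₗ[MonoidAlgebra k P]
          (Submodule.span (MonoidAlgebra k P) {x'}))) ↔
        Submodule.span (MonoidAlgebra k P) {x}
          = Submodule.span (MonoidAlgebra k P) {x'}) ∧
      ((Submodule.span (MonoidAlgebra k P) {x}
          = Submodule.span (MonoidAlgebra k P) {x'}) ↔
        ∃ c : kˣ, lam' = (c : k) * lam ∧ mu' = (c : k) * mu) := by
  classical
  haveI := Fintype.ofFinite P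
  have hp : p.Prime := Fact.out
  have hp2 : 2 ≤ p := hp.two_le
  set M := Submodule.span (MonoidAlgebra k P) {x} with hM
  set M' := Submodule.span (MonoidAlgebra k P) {x'} with hM'
  -- basic distinctness
  have hs1 : s ≠ 1 := fun hcon => by rw [hcon, orderOf_one] at hso; omega
  have ht1 : t ≠ 1 := fun hcon => by rw [hcon, orderOf_one] at hto; omega
  have hstne : s ≠ t := by
    intro hcon
    have : s ∈ Subgroup.zpowers s ⊓ Subgroup.zpowers t :=
      ⟨Subgroup.mem_zpowers s, hcon ▸ Subgroup.mem_zpowers t⟩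
    rw [hst] at this
    exact hs1 this
  -- x ≠ 0
  have hxs : x.coeff s = lam := by
    rw [hx]
    show (lam • (MonoidAlgebra.single s 1 - MonoidAlgebra.single 1 1)
      + mu • (MonoidAlgebra.single t 1 - MonoidAlgebra.single 1 1) : MonoidAlgebra k P).coeff s = lam
    rw [MonoidAlgebra.coeff_add, MonoidAlgebra.coeff_smul, MonoidAlgebra.coeff_smul,
      MonoidAlgebra.coeff_sub, MonoidAlgebra.coeff_sub, MonoidAlgebra.coeff_single s,
      MonoidAlgebra.coeff_single 1, MonoidAlgebra.coeff_single t]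
    rw [Finsupp.add_apply, Finsupp.smul_apply, Finsupp.smul_apply, Finsupp.sub_apply,
      Finsupp.sub_apply, Finsupp.single_apply, Finsupp.single_apply, Finsupp.single_apply,
      if_pos rfl, if_neg (Ne.symm hs1), if_neg (Ne.symm hstne)]
    simp
  have hxt : x.coeff t = mu := by
    rw [hx]
    show (lam • (MonoidAlgebra.single s 1 - MonoidAlgebra.single 1 1)
      + mu • (MonoidAlgebra.single t 1 - MonoidAlgebra.single 1 1) : MonoidAlgebra k P).coeff t = mu
    rw [MonoidAlgebra.coeff_add, MonoidAlgebra.coeff_smul, MonoidAlgebra.coeff_smul,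
      MonoidAlgebra.coeff_sub, MonoidAlgebra.coeff_sub, MonoidAlgebra.coeff_single s,
      MonoidAlgebra.coeff_single 1, MonoidAlgebra.coeff_single t]
    rw [Finsupp.add_apply, Finsupp.smul_apply, Finsupp.smul_apply, Finsupp.sub_apply,
      Finsupp.sub_apply, Finsupp.single_apply, Finsupp.single_apply, Finsupp.single_apply,
      if_pos rfl, if_neg (Ne.symm ht1), if_neg hstne]
    simp
  have hx0 : x ≠ 0 := by
    intro hcon
    apply hlm
    have h1 : lam = 0 := by rw [← hxs, hcon]; rfl
    have h2 : mu = 0 := by rw [← hxt, hcon]; rfl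
    rw [h1, h2]
  -- centrality and nilpotency of x
  have hcent : ∀ a : (MonoidAlgebra k P), Commute a x := x_central s t hs ht lam mu x hx
  have hxp : x ^ p = 0 := x_pow_p_eq_zero s t hs ht hso hto lam mu x hx
  have hxpow : x ^ (p - 1) * x = 0 := by
    rw [← pow_succ]
    rw [show p - 1 + 1 = p by omega]
    exact hxp
  -- annihilation implies the conclusion (iii)
  have hannih_imp : x ^ (p - 1) * x' = 0 →
      ∃ c : kˣ, lam' = (c : k) * lam ∧ mu' = (c : k) * mu := by
    intro hann
    exact exists_unit_of_det_zero lam mu lam' mu' hlm hlm'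
      (det_eq_zero_of_annihilate s t hs ht hso hto hst lam mu lam' mu' hlm hlm' x x' hx hx' hann)
  -- (iii) implies equality of spans
  have hiii_imp_eq : (∃ c : kˣ, lam' = (c : k) * lam ∧ mu' = (c : k) * mu) → M = M' := by
    rintro ⟨c, hc1, hc2⟩
    have hxx' : x' = (c : k) • x := by
      rw [hx', hx, hc1, hc2, smul_add, smul_smul, smul_smul]
    apply le_antisymm
    · rw [hM, Submodule.span_le, Set.singleton_subset_iff]
      have : x = ((c : k)⁻¹ : k) • x' := by
        rw [hxx', smul_smul, inv_mul_cancel₀ (Units.ne_zero c), one_smul]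
      rw [this]
      exact Submodule.smul_of_tower_mem _ _ (Submodule.mem_span_singleton_self x')
    · rw [hM', Submodule.span_le, Set.singleton_subset_iff]
      rw [hxx']
      exact Submodule.smul_of_tower_mem _ _ (Submodule.mem_span_singleton_self x)
  -- equality of spans implies annihilation
  have heq_imp_ann : M = M' → x ^ (p - 1) * x' = 0 := by
    intro heq
    have hx'mem : x' ∈ M := by rw [heq]; exact Submodule.mem_span_singleton_self x'
    obtain ⟨a, ha⟩ := Submodule.mem_span_singleton.mp hx'mem
    rw [← ha, smul_eq_mul, ← mul_assoc, ← ((hcent a).pow_right (p-1)).eq, mul_assoc, hxpow,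
      mul_zero]
  -- iso implies annihilation
  have hiso_imp_ann : Nonempty (M ≃ₗ[(MonoidAlgebra k P)] M') → x ^ (p - 1) * x' = 0 := by
    rintro ⟨φ⟩
    set ξ : ↥M := ⟨x, Submodule.mem_span_singleton_self x⟩ with hξ
    have h1 : (x ^ (p - 1)) • ξ = 0 := by
      apply Subtype.ext
      show (x ^ (p - 1)) • x = (0 : (MonoidAlgebra k P))
      rw [smul_eq_mul, hxpow]
    have h2 : (x ^ (p - 1)) • (φ ξ) = 0 := by
      rw [← map_smul, h1, map_zero]
    set y : (MonoidAlgebra k P) := ↑(φ ξ) with hy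
    have h3 : x ^ (p - 1) * y = 0 := by
      have := congrArg (fun v : ↥M' => (v : (MonoidAlgebra k P))) h2
      simpa [smul_eq_mul] using this
    obtain ⟨m, hm⟩ := φ.surjective ⟨x', Submodule.mem_span_singleton_self x'⟩
    obtain ⟨a, ha⟩ := Submodule.mem_span_singleton.mp m.2
    have hma : m = a • ξ := by
      apply Subtype.ext
      exact ha.symm
    have hx'ay : x' = a * y := by
      have := congrArg (fun v : ↥M' => (v : (MonoidAlgebra k P))) hm
      simp only at this
      rw [hma, map_smul] at hm
      have := congrArg (fun v : ↥M' => (v : (MonoidAlgebra k P))) hm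
      simpa [smul_eq_mul] using this.symm
    rw [hx'ay, ← mul_assoc, ← ((hcent a).pow_right (p-1)).eq, mul_assoc, h3, mul_zero]
  refine ⟨⟨⟨⟨x, Submodule.mem_span_singleton_self x⟩, ?_⟩, ?_⟩, ?_, ?_⟩
  · intro hcon
    apply hx0
    have := congrArg (fun v : ↥M => (v : (MonoidAlgebra k P))) hcon
    simpa using this
  · intro W W' hinf _hsup
    rcases eq_or_ne W ⊥ with hW | hW
    · exact Or.inl hW
    · right
      by_contra hW'
      obtain ⟨v, hvW, hv0⟩ := (Submodule.ne_bot_iff W).mp hW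
      obtain ⟨v', hv'W, hv'0⟩ := (Submodule.ne_bot_iff W').mp hW'
      have hz1 : zedd k P ∈ W.map M.subtype :=
        zedd_mem hP _ ↑v (Submodule.mem_map_of_mem hvW)
          (by simpa using hv0)
      have hz2 : zedd k P ∈ W'.map M.subtype :=
        zedd_mem hP _ ↑v' (Submodule.mem_map_of_mem hv'W)
          (by simpa using hv'0)
      obtain ⟨v1, hv1, hv1e⟩ := Submodule.mem_map.mp hz1
      obtain ⟨v2, hv2, hv2e⟩ := Submodule.mem_map.mp hz2
      have hv12 : v1 = v2 := by
        apply Submodule.injective_subtype M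
        rw [hv1e, hv2e]
      have hbot : v1 ∈ W ⊓ W' := ⟨hv1, hv12 ▸ hv2⟩
      rw [hinf] at hbot
      have : v1 = 0 := hbot
      rw [this] at hv1e
      apply zedd_ne_zero (k := k) (P := P)
      rw [← hv1e]
      simp
  · constructor
    · intro hiso
      exact hiii_imp_eq (hannih_imp (hiso_imp_ann hiso))
    · intro heq
      rw [heq]
      exact ⟨LinearEquiv.refl _ _⟩
  · constructor
    · intro heq
      exact hannih_imp (heq_imp_ann heq)
    · exact hiii_imp_eq
end

section
/- Let k be a field of characteristic 2, let λ, μ ∈ k satisfy λ² + λμ + μ² ≠ 0, and set x = λ(s−1) + μ(t−1) in kQ₈. Set M = kQ₈·(z−1)·x and N = kQ₈·x. Then for every kQ₈-module homomorphism φ : M → N there exists c ∈ kQ₈ such that φ(m) = c·m for all m ∈ M; in particular the range of φ is contained in M. -/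
/-- The quaternion group of order 8. -/
abbrev Q8 : Type := QuaternionGroup 2

/-- The generator `s` of `Q₈`, of order 4. -/
def sQ8 : Q8 := QuaternionGroup.a 1

/-- The generator `t` of `Q₈`, satisfying `t² = s²` and `t·s·t⁻¹ = s⁻¹`. -/
def tQ8 : Q8 := QuaternionGroup.xa 0

/-- The unique central involution `z = s²` of `Q₈`. -/
def zQ8 : Q8 := sQ8 * sQ8

open QuaternionGroup MonoidAlgebra

instance {k : Type} [Field k] : CoeFun (MonoidAlgebra k Q8) (fun _ => Q8 → k) := ⟨fun f => f.coeff⟩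

private lemma maAdd {k : Type} [Field k] (f g : MonoidAlgebra k Q8) (q : Q8) :
    (f + g) q = f q + g q := rfl
private lemma maSub {k : Type} [Field k] (f g : MonoidAlgebra k Q8) (q : Q8) :
    (f - g) q = f q - g q := rfl
private lemma maSmul {k : Type} [Field k] (c : k) (f : MonoidAlgebra k Q8) (q : Q8) :
    (c • f) q = c * f q := rfl

private lemma mulval {k : Type} [Field k] (lam mu : k) (x : MonoidAlgebra k Q8)
    (hx : x = lam • (MonoidAlgebra.of k Q8 sQ8 - 1) + mu • (MonoidAlgebra.of k Q8 tQ8 - 1))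
    (w : MonoidAlgebra k Q8) (q : Q8) :
    (x * w) q = lam * w (a 3 * q) + mu * w (xa 2 * q) - (lam + mu) * w q := by
  have hs : (sQ8)⁻¹ = a 3 := by decide
  have ht : (tQ8)⁻¹ = xa 2 := by decide
  rw [hx, add_mul, smul_mul_assoc, smul_mul_assoc, sub_mul, sub_mul, one_mul]
  simp only [maAdd, maSub, maSmul, MonoidAlgebra.of_apply, MonoidAlgebra.single_mul_apply,
    hs, ht, one_mul]
  ring

private lemma commL {k : Type} [Field k] (w : MonoidAlgebra k Q8)
    (hzw : MonoidAlgebra.single zQ8 (1:k) * w = w) (v : Q8) (b : MonoidAlgebra k Q8) :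
    b * (MonoidAlgebra.single v (1:k) * w) = MonoidAlgebra.single v (1:k) * (b * w) := by
  have hcomm : ∀ u v : Q8, u * v = v * u ∨ u * v = v * u * zQ8 := by decide
  induction b using MonoidAlgebra.induction_on with
  | of u =>
    rw [MonoidAlgebra.of_apply, ← mul_assoc, ← mul_assoc,
      MonoidAlgebra.single_mul_single, MonoidAlgebra.single_mul_single, one_mul]
    rcases hcomm u v with hh | hh
    · rw [hh]
    · rw [hh, show (MonoidAlgebra.single (v * u * zQ8) (1:k)) =
          MonoidAlgebra.single (v * u) (1:k) * MonoidAlgebra.single zQ8 (1:k) from by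
            rw [MonoidAlgebra.single_mul_single, mul_one],
        mul_assoc, hzw]
  | add f g hf hg => rw [add_mul, add_mul, hf, hg, mul_add]
  | smul r f hf => rw [smul_mul_assoc, smul_mul_assoc, hf, mul_smul_comm]


private theorem bigQ8 {k : Type} [Field k] [CharP k 2] (lam mu : k)
    (h : lam ^ 2 + lam * mu + mu ^ 2 ≠ 0) (x : MonoidAlgebra k Q8)
    (hx : x = lam • (MonoidAlgebra.of k Q8 sQ8 - 1) + mu • (MonoidAlgebra.of k Q8 tQ8 - 1)) :
    x * ((MonoidAlgebra.of k Q8 zQ8 - 1) * x) = 0 ∧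
    ∀ y : MonoidAlgebra k Q8, x * y = 0 →
      ∃ c : MonoidAlgebra k Q8, y = c * ((MonoidAlgebra.of k Q8 zQ8 - 1) * x) ∧
        ∀ b : MonoidAlgebra k Q8,
          b * (c * ((MonoidAlgebra.of k Q8 zQ8 - 1) * x)) =
            c * (b * ((MonoidAlgebra.of k Q8 zQ8 - 1) * x)) := by
  have htwo : (2:k) = 0 := CharTwo.two_eq_zero
  set g : MonoidAlgebra k Q8 := (MonoidAlgebra.of k Q8 zQ8 - 1) * x with hgdef
  have hzinv : (zQ8)⁻¹ = a 2 := by decide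
  have gv : ∀ q : Q8, g q = x (a 2 * q) - x q := by
    intro q
    rw [hgdef, sub_mul, one_mul]
    simp only [maSub, MonoidAlgebra.of_apply, MonoidAlgebra.single_mul_apply, hzinv, one_mul]
  have xv : ∀ q : Q8, x q = lam * ((MonoidAlgebra.single (a 1) (1:k) : MonoidAlgebra k Q8) q
      - (MonoidAlgebra.single (a 0) (1:k) : MonoidAlgebra k Q8) q)
      + mu * ((MonoidAlgebra.single (xa 0) (1:k) : MonoidAlgebra k Q8) q - (MonoidAlgebra.single (a 0) (1:k) : MonoidAlgebra k Q8) q) := by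
    intro q; rw [hx]; rfl
  have hg0 : g (a 0) = lam + mu := by
    rw [gv, show ((a 2 : Q8) * a 0) = a 2 from by decide, xv, xv]
    simp +decide [Finsupp.single_apply]
    first
    | done
    | ring1
    | linear_combination (-(lam))*htwo
    | linear_combination (-(mu))*htwo
    | linear_combination (lam)*htwo
    | linear_combination (mu)*htwo
    | linear_combination (-(lam+mu))*htwo
    | linear_combination (-(2*lam))*htwo
    | linear_combination (-(2*lam)-2*mu)*htwo
    | linear_combination (-(2*mu))*htwo
    | linear_combination (lam+mu)*htwo
    | linear_combination (2*lam)*htwo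
    | linear_combination (2*lam+2*mu)*htwo
    | linear_combination (2*mu)*htwo
  have hg1 : g (a 1) = lam := by
    rw [gv, show ((a 2 : Q8) * a 1) = a 3 from by decide, xv, xv]
    simp +decide [Finsupp.single_apply]
    first
    | done
    | ring1
    | linear_combination (-(lam))*htwo
    | linear_combination (-(mu))*htwo
    | linear_combination (lam)*htwo
    | linear_combination (mu)*htwo
    | linear_combination (-(lam+mu))*htwo
    | linear_combination (-(2*lam))*htwo
    | linear_combination (-(2*lam)-2*mu)*htwo
    | linear_combination (-(2*mu))*htwo
    | linear_combination (lam+mu)*htwo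
    | linear_combination (2*lam)*htwo
    | linear_combination (2*lam+2*mu)*htwo
    | linear_combination (2*mu)*htwo
  have hg2 : g (a 2) = lam + mu := by
    rw [gv, show ((a 2 : Q8) * a 2) = a 0 from by decide, xv, xv]
    simp +decide [Finsupp.single_apply]
    first
    | done
    | ring1
    | linear_combination (-(lam))*htwo
    | linear_combination (-(mu))*htwo
    | linear_combination (lam)*htwo
    | linear_combination (mu)*htwo
    | linear_combination (-(lam+mu))*htwo
    | linear_combination (-(2*lam))*htwo
    | linear_combination (-(2*lam)-2*mu)*htwo
    | linear_combination (-(2*mu))*htwo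
    | linear_combination (lam+mu)*htwo
    | linear_combination (2*lam)*htwo
    | linear_combination (2*lam+2*mu)*htwo
    | linear_combination (2*mu)*htwo
  have hg3 : g (a 3) = lam := by
    rw [gv, show ((a 2 : Q8) * a 3) = a 1 from by decide, xv, xv]
    simp +decide [Finsupp.single_apply]
    first
    | done
    | ring1
    | linear_combination (-(lam))*htwo
    | linear_combination (-(mu))*htwo
    | linear_combination (lam)*htwo
    | linear_combination (mu)*htwo
    | linear_combination (-(lam+mu))*htwo
    | linear_combination (-(2*lam))*htwo
    | linear_combination (-(2*lam)-2*mu)*htwo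
    | linear_combination (-(2*mu))*htwo
    | linear_combination (lam+mu)*htwo
    | linear_combination (2*lam)*htwo
    | linear_combination (2*lam+2*mu)*htwo
    | linear_combination (2*mu)*htwo
  have hg4 : g (xa 0) = mu := by
    rw [gv, show ((a 2 : Q8) * xa 0) = xa 2 from by decide, xv, xv]
    simp +decide [Finsupp.single_apply]
    first
    | done
    | ring1
    | linear_combination (-(lam))*htwo
    | linear_combination (-(mu))*htwo
    | linear_combination (lam)*htwo
    | linear_combination (mu)*htwo
    | linear_combination (-(lam+mu))*htwo
    | linear_combination (-(2*lam))*htwo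
    | linear_combination (-(2*lam)-2*mu)*htwo
    | linear_combination (-(2*mu))*htwo
    | linear_combination (lam+mu)*htwo
    | linear_combination (2*lam)*htwo
    | linear_combination (2*lam+2*mu)*htwo
    | linear_combination (2*mu)*htwo
  have hg5 : g (xa 1) = 0 := by
    rw [gv, show ((a 2 : Q8) * xa 1) = xa 3 from by decide, xv, xv]
    simp +decide [Finsupp.single_apply]
    first
    | done
    | ring1
    | linear_combination (-(lam))*htwo
    | linear_combination (-(mu))*htwo
    | linear_combination (lam)*htwo
    | linear_combination (mu)*htwo
    | linear_combination (-(lam+mu))*htwo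
    | linear_combination (-(2*lam))*htwo
    | linear_combination (-(2*lam)-2*mu)*htwo
    | linear_combination (-(2*mu))*htwo
    | linear_combination (lam+mu)*htwo
    | linear_combination (2*lam)*htwo
    | linear_combination (2*lam+2*mu)*htwo
    | linear_combination (2*mu)*htwo
  have hg6 : g (xa 2) = mu := by
    rw [gv, show ((a 2 : Q8) * xa 2) = xa 0 from by decide, xv, xv]
    simp +decide [Finsupp.single_apply]
    first
    | done
    | ring1
    | linear_combination (-(lam))*htwo
    | linear_combination (-(mu))*htwo
    | linear_combination (lam)*htwo
    | linear_combination (mu)*htwo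
    | linear_combination (-(lam+mu))*htwo
    | linear_combination (-(2*lam))*htwo
    | linear_combination (-(2*lam)-2*mu)*htwo
    | linear_combination (-(2*mu))*htwo
    | linear_combination (lam+mu)*htwo
    | linear_combination (2*lam)*htwo
    | linear_combination (2*lam+2*mu)*htwo
    | linear_combination (2*mu)*htwo
  have hg7 : g (xa 3) = 0 := by
    rw [gv, show ((a 2 : Q8) * xa 3) = xa 1 from by decide, xv, xv]
    simp +decide [Finsupp.single_apply]
    first
    | done
    | ring1
    | linear_combination (-(lam))*htwo
    | linear_combination (-(mu))*htwo
    | linear_combination (lam)*htwo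
    | linear_combination (mu)*htwo
    | linear_combination (-(lam+mu))*htwo
    | linear_combination (-(2*lam))*htwo
    | linear_combination (-(2*lam)-2*mu)*htwo
    | linear_combination (-(2*mu))*htwo
    | linear_combination (lam+mu)*htwo
    | linear_combination (2*lam)*htwo
    | linear_combination (2*lam+2*mu)*htwo
    | linear_combination (2*mu)*htwo
  have hxg : x * g = 0 := by
    refine MonoidAlgebra.ext (Finsupp.ext fun q => ?_)
    have h8 : ∀ r : Q8, r = a 0 ∨ r = a 1 ∨ r = a 2 ∨ r = a 3 ∨ r = xa 0 ∨ r = xa 1 ∨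
        r = xa 2 ∨ r = xa 3 := by decide
    have mz : (0 : MonoidAlgebra k Q8) q = 0 := rfl
    rw [mulval lam mu x hx g q, mz]
    rcases h8 q with rfl|rfl|rfl|rfl|rfl|rfl|rfl|rfl
    · rw [show ((a 3 : Q8) * a 0) = a 3 from by decide, show ((xa 2 : Q8) * a 0) = xa 2 from by decide,
        hg3, hg6, hg0]
      linear_combination (-(lam*mu))*htwo
    · rw [show ((a 3 : Q8) * a 1) = a 0 from by decide, show ((xa 2 : Q8) * a 1) = xa 3 from by decide,
        hg0, hg7, hg1]
      linear_combination (0:k)*htwo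
    · rw [show ((a 3 : Q8) * a 2) = a 1 from by decide, show ((xa 2 : Q8) * a 2) = xa 0 from by decide,
        hg1, hg4, hg2]
      linear_combination (-(lam*mu))*htwo
    · rw [show ((a 3 : Q8) * a 3) = a 2 from by decide, show ((xa 2 : Q8) * a 3) = xa 1 from by decide,
        hg2, hg5, hg3]
      linear_combination (0:k)*htwo
    · rw [show ((a 3 : Q8) * xa 0) = xa 1 from by decide, show ((xa 2 : Q8) * xa 0) = a 0 from by decide,
        hg5, hg0, hg4]
      linear_combination (0:k)*htwo
    · rw [show ((a 3 : Q8) * xa 1) = xa 2 from by decide, show ((xa 2 : Q8) * xa 1) = a 1 from by decide,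
        hg6, hg1, hg5]
      linear_combination (lam*mu)*htwo
    · rw [show ((a 3 : Q8) * xa 2) = xa 3 from by decide, show ((xa 2 : Q8) * xa 2) = a 2 from by decide,
        hg7, hg2, hg6]
      linear_combination (0:k)*htwo
    · rw [show ((a 3 : Q8) * xa 3) = xa 0 from by decide, show ((xa 2 : Q8) * xa 3) = a 3 from by decide,
        hg4, hg3, hg7]
      linear_combination (lam*mu)*htwo
  have hzg : MonoidAlgebra.single zQ8 (1:k) * g = g := by
    refine MonoidAlgebra.ext (Finsupp.ext fun q => ?_)
    have h8 : ∀ r : Q8, r = a 0 ∨ r = a 1 ∨ r = a 2 ∨ r = a 3 ∨ r = xa 0 ∨ r = xa 1 ∨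
        r = xa 2 ∨ r = xa 3 := by decide
    rw [MonoidAlgebra.single_mul_apply, hzinv, one_mul]
    rcases h8 q with rfl|rfl|rfl|rfl|rfl|rfl|rfl|rfl
    · rw [show ((a 2 : Q8) * a 0) = a 2 from by decide, hg2, hg0]
    · rw [show ((a 2 : Q8) * a 1) = a 3 from by decide, hg3, hg1]
    · rw [show ((a 2 : Q8) * a 2) = a 0 from by decide, hg0, hg2]
    · rw [show ((a 2 : Q8) * a 3) = a 1 from by decide, hg1, hg3]
    · rw [show ((a 2 : Q8) * xa 0) = xa 2 from by decide, hg6, hg4]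
    · rw [show ((a 2 : Q8) * xa 1) = xa 3 from by decide, hg7, hg5]
    · rw [show ((a 2 : Q8) * xa 2) = xa 0 from by decide, hg4, hg6]
    · rw [show ((a 2 : Q8) * xa 3) = xa 1 from by decide, hg5, hg7]
  refine ⟨hxg, fun y hxy => ?_⟩
  have hEq : ∀ q : Q8, lam * y (a 3 * q) + mu * y (xa 2 * q) - (lam + mu) * y q = 0 := by
    intro q
    have mz : (0 : MonoidAlgebra k Q8) q = 0 := rfl
    rw [← mulval lam mu x hx y q, hxy, mz]
  have Ea0 := hEq (a 0)
  rw [show ((a 3 : Q8) * a 0) = a 3 from by decide, show ((xa 2 : Q8) * a 0) = xa 2 from by decide] at Ea0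
  have Ea1 := hEq (a 1)
  rw [show ((a 3 : Q8) * a 1) = a 0 from by decide, show ((xa 2 : Q8) * a 1) = xa 3 from by decide] at Ea1
  have Ea2 := hEq (a 2)
  rw [show ((a 3 : Q8) * a 2) = a 1 from by decide, show ((xa 2 : Q8) * a 2) = xa 0 from by decide] at Ea2
  have Ea3 := hEq (a 3)
  rw [show ((a 3 : Q8) * a 3) = a 2 from by decide, show ((xa 2 : Q8) * a 3) = xa 1 from by decide] at Ea3
  have Ex0 := hEq (xa 0)
  rw [show ((a 3 : Q8) * xa 0) = xa 1 from by decide, show ((xa 2 : Q8) * xa 0) = a 0 from by decide] at Ex0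
  have Ex1 := hEq (xa 1)
  rw [show ((a 3 : Q8) * xa 1) = xa 2 from by decide, show ((xa 2 : Q8) * xa 1) = a 1 from by decide] at Ex1
  have Ex2 := hEq (xa 2)
  rw [show ((a 3 : Q8) * xa 2) = xa 3 from by decide, show ((xa 2 : Q8) * xa 2) = a 2 from by decide] at Ex2
  have Ex3 := hEq (xa 3)
  rw [show ((a 3 : Q8) * xa 3) = xa 0 from by decide, show ((xa 2 : Q8) * xa 3) = a 3 from by decide] at Ex3
  have hD2 : (lam ^ 2 + lam * mu + mu ^ 2) ^ 2 ≠ 0 := pow_ne_zero _ h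
  set Fs : k := lam^3*y (a 3) with hFs
  set Ft : k := lam^3*y (a 3) + lam^3*y (xa 1) + mu^3*y (xa 2) + lam*mu^2*y (xa 2) + lam^2*mu*y (xa 2) + lam^3*y (xa 2) + lam*mu^2*y (xa 3) + lam^3*y (xa 3) with hFt
  set Fst : k := lam^3*y (a 3) + mu^3*y (xa 1) + lam*mu^2*y (xa 1) + lam*mu^2*y (xa 2) + lam^3*y (xa 2) + lam^2*mu*y (xa 3) + lam^3*y (xa 3) with hFst
  set c0 : MonoidAlgebra k Q8 := MonoidAlgebra.single (a 1) Fs + MonoidAlgebra.single (xa 0) Ft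
      + MonoidAlgebra.single (xa 3) Fst with hc0
  have hcert : c0 * g = ((lam ^ 2 + lam * mu + mu ^ 2) ^ 2) • y := by
    refine MonoidAlgebra.ext (Finsupp.ext fun q => ?_)
    have h8 : ∀ r : Q8, r = a 0 ∨ r = a 1 ∨ r = a 2 ∨ r = a 3 ∨ r = xa 0 ∨ r = xa 1 ∨
        r = xa 2 ∨ r = xa 3 := by decide
    rw [hc0]
    simp only [add_mul, maAdd, maSmul, MonoidAlgebra.single_mul_apply]
    rw [show ((a 1 : Q8))⁻¹ = a 3 from by decide, show ((xa 0 : Q8))⁻¹ = xa 2 from by decide,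
      show ((xa 3 : Q8))⁻¹ = xa 1 from by decide]
    rcases h8 q with rfl|rfl|rfl|rfl|rfl|rfl|rfl|rfl
    · rw [show ((a 3 : Q8) * a 0) = a 3 from by decide, show ((xa 2 : Q8) * a 0) = xa 2 from by decide,
        show ((xa 1 : Q8) * a 0) = xa 1 from by decide, hg3, hg6, hg5]
      rw [hFs, hFt, hFst]
      linear_combination (lam^3)*Ea1 + (mu^3)*Ea2 + (lam*mu^2)*Ea2 + (lam^2*mu)*Ea2 + (lam^3)*Ea2 + (lam^3)*Ea3 + (mu^3)*Ex0 + (lam^2*mu)*Ex0 + (lam*mu^2)*Ex1 + (lam^2*mu)*Ex1 + (mu^3)*Ex2 + ((-1)*mu^4*(y (a 0)) + mu^4*(y (xa 2)) + (-1)*lam*mu^3*(y (a 0)) + (-1)*lam*mu^3*(y (a 1)) + lam*mu^3*(y (a 2)) + lam*mu^3*(y (xa 2)) + (-2)*lam^2*mu^2*(y (a 0)) + (-1)*lam^2*mu^2*(y (a 1)) + lam^2*mu^2*(y (a 2)) + lam^2*mu^2*(y (xa 1)) + (-1)*lam^3*mu*(y (a 0)) + lam^3*mu*(y (a 2)) +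 lam^3*mu*(y (a 3)) + (-1)*lam^4*(y (a 0)) + lam^4*(y (a 3)))*htwo
    · rw [show ((a 3 : Q8) * a 1) = a 0 from by decide, show ((xa 2 : Q8) * a 1) = xa 3 from by decide,
        show ((xa 1 : Q8) * a 1) = xa 2 from by decide, hg0, hg7, hg6]
      rw [hFs, hFt, hFst]
      linear_combination (lam^3)*Ea2 + (lam^2*mu)*Ea3 + (lam^3)*Ea3 + (mu^3)*Ex1 + (lam^2*mu)*Ex1 + (lam^2*mu)*Ex3 + ((-1)*mu^4*(y (a 1)) + mu^4*(y (xa 1)) + (-1)*lam*mu^3*(y (a 1)) + lam*mu^3*(y (xa 1)) + (-2)*lam^2*mu^2*(y (a 1)) + lam^2*mu^2*(y (xa 3)) + (-1)*lam^3*mu*(y (a 1)) + 2*lam^3*mu*(y (a 3)) + (-1)*lam^3*mu*(y (xa 0)) + lam^3*mu*(y (xa 3)) + (-1)*lam^4*(y (a 1)) + lam^4*(y (a 3)))*htwo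
    · rw [show ((a 3 : Q8) * a 2) = a 1 from by decide, show ((xa 2 : Q8) * a 2) = xa 0 from by decide,
        show ((xa 1 : Q8) * a 2) = xa 3 from by decide, hg1, hg4, hg7]
      rw [hFs, hFt, hFst]
      linear_combination (lam^3)*Ea3 + (mu^3)*Ex2 + (lam^2*mu)*Ex2 + ((-1)*mu^4*(y (a 2)) + mu^4*(y (xa 2)) + (-1)*lam*mu^3*(y (a 2)) + lam*mu^3*(y (xa 2)) + (-2)*lam^2*mu^2*(y (a 2)) + lam^2*mu^2*(y (xa 2)) + (-1)*lam^3*mu*(y (a 2)) + lam^3*mu*(y (a 3)) + lam^3*mu*(y (xa 2)) + (-1)*lam^4*(y (a 2)) + lam^4*(y (a 3)))*htwo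
    · rw [show ((a 3 : Q8) * a 3) = a 2 from by decide, show ((xa 2 : Q8) * a 3) = xa 1 from by decide,
        show ((xa 1 : Q8) * a 3) = xa 0 from by decide, hg2, hg5, hg4]
      rw [hFs, hFt, hFst]
      linear_combination (mu^3)*Ea3 + (lam*mu^2)*Ea3 + (lam*mu^2)*Ex2 + (lam^2*mu)*Ex2 + ((-1)*lam*mu^3*(y (a 2)) + lam*mu^3*(y (xa 2)) + (-1)*lam^2*mu^2*(y (a 2)) + (-1)*lam^2*mu^2*(y (a 3)) + lam^2*mu^2*(y (xa 2)) + lam^3*mu*(y (xa 2)))*htwo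
    · rw [show ((a 3 : Q8) * xa 0) = xa 1 from by decide, show ((xa 2 : Q8) * xa 0) = a 0 from by decide,
        show ((xa 1 : Q8) * xa 0) = a 1 from by decide, hg5, hg0, hg1]
      rw [hFs, hFt, hFst]
      linear_combination (mu^3)*Ea2 + (lam^2*mu)*Ea2 + (lam*mu^2)*Ex1 + (lam^3)*Ex1 + (mu^3)*Ex2 + (lam*mu^2)*Ex2 + (lam^2*mu)*Ex2 + (lam^3)*Ex2 + (lam^3)*Ex3 + ((-1)*mu^4*(y (xa 0)) + mu^4*(y (xa 2)) + (-1)*lam*mu^3*(y (a 1)) + (-1)*lam*mu^3*(y (xa 0)) + lam*mu^3*(y (xa 1)) + 2*lam*mu^3*(y (xa 2)) + (-2)*lam^2*mu^2*(y (xa 0)) + lam^2*mu^2*(y (xa 1)) + 2*lam^2*mu^2*(y (xa 2)) + (-1)*lam^3*mu*(y (a 1)) + (-1)*lam^3*mu*(y (xa 0)) + lam^3*mu*(y (xa 1)) + 2*lam^3*mu*(y (xa 2)) + lam^3*mu*(y (xa 3)) + lam^4*(y (a 3)) + (-1)*lam^4*(y (xa 0)) + lam^4*(y (xa 1)) + lam^4*(y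 (xa 2)) + lam^4*(y (xa 3)))*htwo
    · rw [show ((a 3 : Q8) * xa 1) = xa 2 from by decide, show ((xa 2 : Q8) * xa 1) = a 1 from by decide,
        show ((xa 1 : Q8) * xa 1) = a 2 from by decide, hg6, hg1, hg2]
      rw [hFs, hFt, hFst]
      linear_combination (lam*mu^3*(y (xa 2)) + (-1)*lam^2*mu^2*(y (xa 1)) + lam^2*mu^2*(y (xa 2)) + lam^2*mu^2*(y (xa 3)) + lam^3*mu*(y (a 3)) + (-1)*lam^3*mu*(y (xa 1)) + lam^3*mu*(y (xa 2)) + lam^3*mu*(y (xa 3)) + lam^4*(y (a 3)) + lam^4*(y (xa 2)) + lam^4*(y (xa 3)))*htwo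
    · rw [show ((a 3 : Q8) * xa 2) = xa 3 from by decide, show ((xa 2 : Q8) * xa 2) = a 2 from by decide,
        show ((xa 1 : Q8) * xa 2) = a 3 from by decide, hg7, hg2, hg3]
      rw [hFs, hFt, hFst]
      linear_combination (lam^2*mu)*Ea2 + (lam*mu^2)*Ea3 + (lam^2*mu)*Ea3 + (lam^3)*Ex1 + (lam*mu^2)*Ex3 + (lam*mu^3*(y (xa 3)) + lam^2*mu^2*(y (a 3)) + (-1)*lam^2*mu^2*(y (xa 0)) + lam^2*mu^2*(y (xa 3)) + (-1)*lam^3*mu*(y (a 1)) + lam^3*mu*(y (a 3)) + lam^3*mu*(y (xa 1)) + lam^3*mu*(y (xa 3)) + lam^4*(y (a 3)) + lam^4*(y (xa 1)) + lam^4*(y (xa 3)))*htwo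
    · rw [show ((a 3 : Q8) * xa 3) = xa 0 from by decide, show ((xa 2 : Q8) * xa 3) = a 3 from by decide,
        show ((xa 1 : Q8) * xa 3) = a 0 from by decide, hg4, hg3, hg0]
      rw [hFs, hFt, hFst]
      linear_combination (lam*mu^2)*Ea2 + (lam^2*mu)*Ea2 + (mu^3)*Ea3 + (lam^2*mu)*Ex1 + (lam^3)*Ex1 + (lam^3)*Ex2 + (mu^3)*Ex3 + (lam*mu^2)*Ex3 + ((-1)*lam*mu^3*(y (xa 0)) + lam*mu^3*(y (xa 1)) + lam*mu^3*(y (xa 2)) + (-1)*lam^2*mu^2*(y (a 1)) + lam^2*mu^2*(y (a 2)) + (-1)*lam^2*mu^2*(y (xa 0)) + lam^2*mu^2*(y (xa 1)) + lam^2*mu^2*(y (xa 2)) + (-1)*lam^3*mu*(y (a 1)) + lam^3*mu*(y (a 3)) + lam^3*mu*(y (xa 1)) + lam^3*mu*(y (xa 2)) + lam^4*(y (a 3)) + lam^4*(y (xa 1)) + lam^4*(y (xa 2)))*htwo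
  refine ⟨((lam ^ 2 + lam * mu + mu ^ 2) ^ 2)⁻¹ • c0, ?_, ?_⟩
  · rw [smul_mul_assoc, hcert, smul_smul, inv_mul_cancel₀ hD2, one_smul]
  · intro b
    have hsingle : ∀ (F : k) (v : Q8), (MonoidAlgebra.single v F : MonoidAlgebra k Q8)
        = F • MonoidAlgebra.single v (1:k) := by
      intro F v; rw [MonoidAlgebra.smul_single', mul_one]
    have swap : b * (c0 * g) = c0 * (b * g) := by
      rw [hc0, hsingle Fs, hsingle Ft, hsingle Fst]
      simp only [add_mul, mul_add, smul_mul_assoc, mul_smul_comm]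
      rw [commL g hzg (a 1) b, commL g hzg (xa 0) b, commL g hzg (xa 3) b]
    simp only [smul_mul_assoc, mul_smul_comm]
    rw [swap]


/-- Every `kQ₈`-homomorphism `φ : M → N`, where `M = kQ₈·(z-1)·x ⊆ N = kQ₈·x`,
is given by left multiplication by some `c ∈ kQ₈`; in particular the range of
`φ` is contained in `M`. -/
theorem stmt19 (k : Type) [Field k] [CharP k 2]
    (lam mu : k) (h : lam ^ 2 + lam * mu + mu ^ 2 ≠ 0)
    (x : MonoidAlgebra k Q8)
    (hx : x = lam • (MonoidAlgebra.of k Q8 sQ8 - 1) +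
        mu • (MonoidAlgebra.of k Q8 tQ8 - 1))
    (M N : Submodule (MonoidAlgebra k Q8) (MonoidAlgebra k Q8))
    (hM : M = Submodule.span (MonoidAlgebra k Q8)
        {(MonoidAlgebra.of k Q8 zQ8 - 1) * x})
    (hN : N = Submodule.span (MonoidAlgebra k Q8) {x})
    (φ : M →ₗ[MonoidAlgebra k Q8] N) :
    (∃ c : MonoidAlgebra k Q8, ∀ m : M, (φ m : MonoidAlgebra k Q8) = c * (m : MonoidAlgebra k Q8)) ∧
      ∀ m : M, (φ m : MonoidAlgebra k Q8) ∈ M := by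
  obtain ⟨hxg0, hkey⟩ := bigQ8 lam mu h x hx
  set g : MonoidAlgebra k Q8 := (MonoidAlgebra.of k Q8 zQ8 - 1) * x with hgdef
  have hgM : g ∈ M := by rw [hM]; exact Submodule.mem_span_singleton_self _
  set gM : M := ⟨g, hgM⟩ with hgMdef
  have hy0 : x * ((φ gM : N) : MonoidAlgebra k Q8) = 0 := by
    have h1 : x • gM = (0 : M) := by
      apply Subtype.ext
      show x • g = 0
      rw [smul_eq_mul]; exact hxg0
    have h2 : φ (x • gM) = x • φ gM := map_smul φ x gM
    rw [h1, map_zero] at h2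
    have h3 : ((x • φ gM : N) : MonoidAlgebra k Q8) = x * ((φ gM : N) : MonoidAlgebra k Q8) := by
      rw [Submodule.coe_smul, smul_eq_mul]
    rw [← h3, ← h2]; rfl
  obtain ⟨c, hyc, hcomm⟩ := hkey _ hy0
  have main : ∀ m : M, (φ m : MonoidAlgebra k Q8) = c * (m : MonoidAlgebra k Q8) := by
    intro m
    have hmM : (m : MonoidAlgebra k Q8) ∈ Submodule.span (MonoidAlgebra k Q8) {g} := by
      rw [← hM]; exact m.2
    obtain ⟨am, ham⟩ := Submodule.mem_span_singleton.mp hmM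
    have hm2 : m = am • gM := by
      apply Subtype.ext
      rw [← ham]; rfl
    have step : (φ m : MonoidAlgebra k Q8) = am * ((φ gM : N) : MonoidAlgebra k Q8) := by
      rw [hm2, map_smul, Submodule.coe_smul, smul_eq_mul]
    have ham' : am * g = (m : MonoidAlgebra k Q8) := by rw [← smul_eq_mul]; exact ham
    rw [step, hyc, hcomm am, ham']
  exact ⟨⟨c, main⟩, fun m => by
    rw [main m, ← smul_eq_mul]
    exact M.smul_mem c m.2⟩
end
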